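/- Let M be an n-dimensional k-vector space with basis m₁, …, mₙ and let φ : {1, …, n} → {1, …, n} be a function with φ ∘ φ = φ. Define R^φ : M ⊗ M → M ⊗ M by R^φ(m_i ⊗ m_j) = δ_{ij} · [i ∈ Im(φ)] · ∑_{a, b ∈ φ⁻¹(i)} m_a ⊗ m_b (where [i ∈ Im(φ)] is 1 if i lies in the image of φ and 0 otherwise, and δ_{ij} is the Kronecker delta). Then R := R^φ satisfies R¹²R¹³ = R¹³R¹² = R¹²R²³ = R²³R¹², and R^φ is symmetric, i.e. τ ∘ R^φ ∘ τ = R^φ. In particular R^φ is a solution of the Long equation. -/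

import Mathlib

open TensorProduct

noncomputable section

variable {k M : Type*} [Field k] [AddCommGroup M] [Module k M]

/-- The flip map τ : M ⊗ M → M ⊗ M, τ(m ⊗ n) = n ⊗ m. -/
def tau (k M : Type*) [Field k] [AddCommGroup M] [Module k M] :
    M ⊗[k] M →ₗ[k] M ⊗[k] M := (TensorProduct.comm k M M).toLinearMap

/-- R¹² = R ⊗ id on M ⊗ (M ⊗ M) (transported along the associator). -/
def R12 (R : M ⊗[k] M →ₗ[k] M ⊗[k] M) :
    M ⊗[k] (M ⊗[k] M) →ₗ[k] M ⊗[k] (M ⊗[k] M) :=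
  (TensorProduct.assoc k M M M).toLinearMap ∘ₗ
    TensorProduct.map R LinearMap.id ∘ₗ (TensorProduct.assoc k M M M).symm.toLinearMap

/-- R²³ = id ⊗ R on M ⊗ (M ⊗ M). -/
def R23 (R : M ⊗[k] M →ₗ[k] M ⊗[k] M) :
    M ⊗[k] (M ⊗[k] M) →ₗ[k] M ⊗[k] (M ⊗[k] M) :=
  TensorProduct.map LinearMap.id R

/-- R¹³ = (id ⊗ τ)(R ⊗ id)(id ⊗ τ) on M ⊗ (M ⊗ M). -/
def R13 (R : M ⊗[k] M →ₗ[k] M ⊗[k] M) :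
    M ⊗[k] (M ⊗[k] M) →ₗ[k] M ⊗[k] (M ⊗[k] M) :=
  TensorProduct.map LinearMap.id (tau k M) ∘ₗ R12 R ∘ₗ
    TensorProduct.map LinearMap.id (tau k M)

/-- R is a solution of the Long equation: R¹²R¹³ = R¹³R¹² and R¹²R²³ = R²³R¹². -/
def IsLongSolution (R : M ⊗[k] M →ₗ[k] M ⊗[k] M) : Prop :=
  R12 R ∘ₗ R13 R = R13 R ∘ₗ R12 R ∧ R12 R ∘ₗ R23 R = R23 R ∘ₗ R12 R

end

theorem long_equation_Rphi
    {k M : Type*} [Field k] [AddCommGroup M] [Module k M]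
    {n : ℕ} (m : Module.Basis (Fin n) k M)
    (φ : Fin n → Fin n) (hφ : φ ∘ φ = φ)
    (R : M ⊗[k] M →ₗ[k] M ⊗[k] M)
    (hR : ∀ i j, R (m i ⊗ₜ[k] m j) =
      if i = j ∧ i ∈ Finset.univ.image φ then
        ∑ a ∈ Finset.univ.filter (fun a => φ a = i),
          ∑ b ∈ Finset.univ.filter (fun b => φ b = i), m a ⊗ₜ[k] m b
      else 0) :
    (R12 R ∘ₗ R13 R = R13 R ∘ₗ R12 R ∧
     R13 R ∘ₗ R12 R = R12 R ∘ₗ R23 R ∧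
     R12 R ∘ₗ R23 R = R23 R ∘ₗ R12 R) ∧
    tau k M ∘ₗ R ∘ₗ tau k M = R := by
  classical
  set F : Fin n → Finset (Fin n) := fun i => Finset.univ.filter (fun a => φ a = i) with hFdef
  have hmemF : ∀ i a : Fin n, a ∈ F i ↔ φ a = i := by
    intro i a; simp [hFdef]
  have him : ∀ i : Fin n, i ∈ Finset.univ.image φ ↔ φ i = i := by
    intro i
    simp only [Finset.mem_image, Finset.mem_univ, true_and]
    constructor
    · rintro ⟨x, rfl⟩; exact congrFun hφ x
    · intro h; exact ⟨i, h⟩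
  have hR' : ∀ i j, R (m i ⊗ₜ[k] m j) =
      if i = j ∧ φ i = i then ∑ a ∈ F i, ∑ b ∈ F i, m a ⊗ₜ[k] m b else 0 := by
    intro i j; rw [hR]; simp only [him, hFdef]
  -- action of R12, R23, R13 on basis elements
  have hR12 : ∀ i j l : Fin n, R12 R (m i ⊗ₜ[k] (m j ⊗ₜ[k] m l)) =
      if i = j ∧ φ i = i then
        ∑ a ∈ F i, ∑ b ∈ F i, m a ⊗ₜ[k] (m b ⊗ₜ[k] m l) else 0 := by
    intro i j l
    simp only [R12, LinearMap.comp_apply, LinearEquiv.coe_coe,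
      TensorProduct.assoc_symm_tmul, TensorProduct.map_tmul, LinearMap.id_coe, id_eq, hR']
    split_ifs with h
    · rw [TensorProduct.sum_tmul, map_sum]
      refine Finset.sum_congr rfl fun a _ => ?_
      rw [TensorProduct.sum_tmul, map_sum]
      exact Finset.sum_congr rfl fun b _ => by rw [TensorProduct.assoc_tmul]
    · simp
  have hR23 : ∀ i j l : Fin n, R23 R (m i ⊗ₜ[k] (m j ⊗ₜ[k] m l)) =
      if j = l ∧ φ j = j then
        ∑ a ∈ F j, ∑ b ∈ F j, m i ⊗ₜ[k] (m a ⊗ₜ[k] m b) else 0 := by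
    intro i j l
    simp only [R23, TensorProduct.map_tmul, LinearMap.id_coe, id_eq, hR']
    split_ifs with h
    · rw [TensorProduct.tmul_sum]
      exact Finset.sum_congr rfl fun a _ => by rw [TensorProduct.tmul_sum]
    · simp
  have htau : ∀ x y : M, tau k M (x ⊗ₜ[k] y) = y ⊗ₜ[k] x := by
    intro x y; simp [tau]
  have hR13 : ∀ i j l : Fin n, R13 R (m i ⊗ₜ[k] (m j ⊗ₜ[k] m l)) =
      if i = l ∧ φ i = i then
        ∑ a ∈ F i, ∑ b ∈ F i, m a ⊗ₜ[k] (m j ⊗ₜ[k] m b) else 0 := by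
    intro i j l
    simp only [R13, LinearMap.comp_apply, TensorProduct.map_tmul, LinearMap.id_coe, id_eq,
      htau, hR12]
    split_ifs with h
    · rw [map_sum]
      refine Finset.sum_congr rfl fun a _ => ?_
      rw [map_sum]
      refine Finset.sum_congr rfl fun b _ => ?_
      simp [htau]
    · simp
  -- collapsing lemmas
  have collapse2 : ∀ (i j : Fin n), φ i = i → ∀ (f : Fin n → Fin n → M ⊗[k] (M ⊗[k] M)),
      (∑ a ∈ F i, ∑ b ∈ F i, if a = j ∧ φ a = a then f a b else 0)
        = if i = j then ∑ b ∈ F i, f i b else 0 := by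
    intro i j hi f
    have h1 : ∀ a ∈ F i, (∑ b ∈ F i, if a = j ∧ φ a = a then f a b else 0)
        = if a = i then (if i = j then ∑ b ∈ F i, f a b else 0) else 0 := by
      intro a ha
      rw [hmemF] at ha
      have hiff : (a = j ∧ φ a = a) ↔ (a = i ∧ i = j) := by
        constructor
        · rintro ⟨h1, h2⟩
          have hai : a = i := h2.symm.trans ha
          exact ⟨hai, by rw [← hai, h1]⟩
        · rintro ⟨h1, h2⟩
          exact ⟨h1.trans h2, by rw [h1, hi]⟩
      calc (∑ b ∈ F i, if a = j ∧ φ a = a then f a b else 0)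
          = ∑ b ∈ F i, if a = i ∧ i = j then f a b else 0 :=
            Finset.sum_congr rfl fun b _ => if_congr hiff rfl rfl
        _ = if a = i then (if i = j then ∑ b ∈ F i, f a b else 0) else 0 := by
            by_cases h1 : a = i
            · by_cases h2 : i = j
              · simp only [h1, h2, and_self, if_true]
              · simp only [h1, h2, and_false, if_false, if_true, Finset.sum_const_zero]
            · simp only [h1, false_and, if_false, Finset.sum_const_zero]
    rw [Finset.sum_congr rfl h1, Finset.sum_ite_eq' (F i) i]
    rw [if_pos ((hmemF i i).2 hi)]
  have collapse2' : ∀ (i j : Fin n), φ j = j → ∀ (f : Fin n → Fin n → M ⊗[k] (M ⊗[k] M)),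
      (∑ a ∈ F j, ∑ b ∈ F j, if i = a ∧ φ i = i then f a b else 0)
        = if i = j then ∑ b ∈ F j, f j b else 0 := by
    intro i j hj f
    have h1 : ∀ a ∈ F j, (∑ b ∈ F j, if i = a ∧ φ i = i then f a b else 0)
        = if a = j then (if i = j then ∑ b ∈ F j, f a b else 0) else 0 := by
      intro a ha
      rw [hmemF] at ha
      have hiff : (i = a ∧ φ i = i) ↔ (a = j ∧ i = j) := by
        constructor
        · rintro ⟨h1, h2⟩
          have haj : a = j := by rw [← h1] at ha ⊢; rw [← h2, ha]
          exact ⟨haj, by rw [h1, haj]⟩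
        · rintro ⟨h1, h2⟩
          exact ⟨h2.trans h1.symm, by rw [h2, hj]⟩
      calc (∑ b ∈ F j, if i = a ∧ φ i = i then f a b else 0)
          = ∑ b ∈ F j, if a = j ∧ i = j then f a b else 0 :=
            Finset.sum_congr rfl fun b _ => if_congr hiff rfl rfl
        _ = if a = j then (if i = j then ∑ b ∈ F j, f a b else 0) else 0 := by
            by_cases h1 : a = j
            · by_cases h2 : i = j
              · simp only [h1, h2, and_self, if_true]
              · simp only [h1, h2, true_and, and_false, if_false, if_true, Finset.sum_const_zero]
            · simp only [h1, false_and, if_false, Finset.sum_const_zero]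
    rw [Finset.sum_congr rfl h1, Finset.sum_ite_eq' (F j) j]
    rw [if_pos ((hmemF j j).2 hj)]
  -- sum reorderings
  have reorder1 : ∀ (s : Finset (Fin n)) (g : Fin n → Fin n → Fin n → M ⊗[k] (M ⊗[k] M)),
      (∑ b ∈ s, ∑ c ∈ s, ∑ d ∈ s, g c d b) = ∑ a ∈ s, ∑ b ∈ s, ∑ c ∈ s, g a b c := by
    intro s g
    rw [Finset.sum_comm]
    exact Finset.sum_congr rfl fun c _ => Finset.sum_comm
  have reorder2 : ∀ (s : Finset (Fin n)) (g : Fin n → Fin n → Fin n → M ⊗[k] (M ⊗[k] M)),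
      (∑ b ∈ s, ∑ c ∈ s, ∑ d ∈ s, g c b d) = ∑ a ∈ s, ∑ b ∈ s, ∑ c ∈ s, g a b c := by
    intro s g
    exact Finset.sum_comm
  -- canonical value T
  set T : Fin n → Fin n → Fin n → M ⊗[k] (M ⊗[k] M) := fun i j l =>
    if i = j ∧ i = l ∧ φ i = i then
      ∑ a ∈ F i, ∑ b ∈ F i, ∑ c ∈ F i, m a ⊗ₜ[k] (m b ⊗ₜ[k] m c) else 0 with hTdef
  -- the four compositions
  have c1213 : ∀ i j l : Fin n, R12 R (R13 R (m i ⊗ₜ[k] (m j ⊗ₜ[k] m l))) = T i j l := by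
    intro i j l
    rw [hR13]; simp only [hTdef]
    by_cases h : i = l ∧ φ i = i
    · obtain ⟨hil, hi⟩ := h
      rw [if_pos ⟨hil, hi⟩, map_sum]
      simp only [map_sum, hR12]
      rw [collapse2 i j hi (fun a b => ∑ c ∈ F a, ∑ d ∈ F a, m c ⊗ₜ[k] (m d ⊗ₜ[k] m b))]
      by_cases hij : i = j
      · rw [if_pos hij, if_pos ⟨hij, hil, hi⟩]
        exact reorder1 (F i) (fun a b c => m a ⊗ₜ[k] (m b ⊗ₜ[k] m c))
      · rw [if_neg hij, if_neg (fun h2 => hij h2.1)]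
    · rw [if_neg h, if_neg (fun h2 => h ⟨h2.2.1, h2.2.2⟩), map_zero]
  have c1312 : ∀ i j l : Fin n, R13 R (R12 R (m i ⊗ₜ[k] (m j ⊗ₜ[k] m l))) = T i j l := by
    intro i j l
    rw [hR12]; simp only [hTdef]
    by_cases h : i = j ∧ φ i = i
    · obtain ⟨hij, hi⟩ := h
      rw [if_pos ⟨hij, hi⟩, map_sum]
      simp only [map_sum, hR13]
      rw [collapse2 i l hi (fun a b => ∑ c ∈ F a, ∑ d ∈ F a, m c ⊗ₜ[k] (m b ⊗ₜ[k] m d))]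
      by_cases hil : i = l
      · rw [if_pos hil, if_pos ⟨hij, hil, hi⟩]
        exact reorder2 (F i) (fun a b c => m a ⊗ₜ[k] (m b ⊗ₜ[k] m c))
      · rw [if_neg hil, if_neg (fun h2 => hil h2.2.1)]
    · rw [if_neg h, if_neg (fun h2 => h ⟨h2.1, h2.2.2⟩), map_zero]
  have c1223 : ∀ i j l : Fin n, R12 R (R23 R (m i ⊗ₜ[k] (m j ⊗ₜ[k] m l))) = T i j l := by
    intro i j l
    rw [hR23]; simp only [hTdef]
    by_cases h : j = l ∧ φ j = j
    · obtain ⟨hjl, hj⟩ := h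
      rw [if_pos ⟨hjl, hj⟩, map_sum]
      simp only [map_sum, hR12]
      rw [collapse2' i j hj (fun a b => ∑ c ∈ F i, ∑ d ∈ F i, m c ⊗ₜ[k] (m d ⊗ₜ[k] m b))]
      by_cases hij : i = j
      · rw [if_pos hij, if_pos ⟨hij, hij.trans hjl, by rw [hij]; exact hj⟩]
        rw [show F j = F i by rw [hij]]
        exact reorder1 (F i) (fun a b c => m a ⊗ₜ[k] (m b ⊗ₜ[k] m c))
      · rw [if_neg hij, if_neg (fun h2 => hij h2.1)]
    · rw [if_neg h, if_neg (fun h2 => h ⟨h2.1.symm.trans h2.2.1, by rw [← h2.1]; exact h2.2.2⟩),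
        map_zero]
  have c2312 : ∀ i j l : Fin n, R23 R (R12 R (m i ⊗ₜ[k] (m j ⊗ₜ[k] m l))) = T i j l := by
    intro i j l
    rw [hR12]; simp only [hTdef]
    by_cases h : i = j ∧ φ i = i
    · obtain ⟨hij, hi⟩ := h
      rw [if_pos ⟨hij, hi⟩, map_sum]
      simp only [map_sum, hR23]
      rw [Finset.sum_comm]
      rw [collapse2 i l hi (fun b a => ∑ c ∈ F b, ∑ d ∈ F b, m a ⊗ₜ[k] (m c ⊗ₜ[k] m d))]
      by_cases hil : i = l
      · rw [if_pos hil, if_pos ⟨hij, hil, hi⟩]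
      · rw [if_neg hil, if_neg (fun h2 => hil h2.2.1)]
    · rw [if_neg h, if_neg (fun h2 => h ⟨h2.1, h2.2.2⟩), map_zero]
  -- extensionality over the tensor basis
  have ext3 : ∀ (f g : M ⊗[k] (M ⊗[k] M) →ₗ[k] M ⊗[k] (M ⊗[k] M)),
      (∀ i j l : Fin n, f (m i ⊗ₜ[k] (m j ⊗ₜ[k] m l)) = g (m i ⊗ₜ[k] (m j ⊗ₜ[k] m l)))
        → f = g := by
    intro f g hfg
    apply (Module.Basis.tensorProduct m (Module.Basis.tensorProduct m m)).ext
    rintro ⟨i, j, l⟩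
    simpa [Module.Basis.tensorProduct_apply] using hfg i j l
  refine ⟨⟨?_, ?_, ?_⟩, ?_⟩
  · exact ext3 _ _ fun i j l => by
      simp only [LinearMap.comp_apply, c1213 i j l, c1312 i j l]
  · exact ext3 _ _ fun i j l => by
      simp only [LinearMap.comp_apply, c1312 i j l, c1223 i j l]
  · exact ext3 _ _ fun i j l => by
      simp only [LinearMap.comp_apply, c1223 i j l, c2312 i j l]
  · apply (Module.Basis.tensorProduct m m).ext
    rintro ⟨i, j⟩
    simp only [Module.Basis.tensorProduct_apply, LinearMap.comp_apply, htau]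
    by_cases h : i = j ∧ φ i = i
    · obtain ⟨rfl, hi⟩ := h
      rw [hR' i i, if_pos ⟨rfl, hi⟩, map_sum]
      simp only [map_sum, htau]
      exact Finset.sum_comm
    · have h' : ¬(j = i ∧ φ j = j) := by
        rintro ⟨rfl, hj⟩; exact h ⟨rfl, hj⟩
      rw [hR' j i, if_neg h', map_zero, hR' i j, if_neg h]
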